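/- (Invariance of two-step GMM to transformation.) Let K be an R×T matrix with KK' positive definite, U the upper-triangular Cholesky factor of (KK')⁻¹, and F = UK. Suppose there is an invertible matrix C with CZ_i' = Z_i'U for all i. Let X̃_i = KX_i, ỹ_i = Ky_i, ẽ_i = Ke_i and Ẍ_i = FX_i, ÿ_i = Fy_i, ë_i = Fe_i. If the two-step GMM weighting matrices W_K = Σ_i Z_i'ẽ_iẽ_i'Z_i and W_F = Σ_i Z_i'ë_ië_i'Z_i and the corresponding 'Hessian' matrices are invertible, then the two-step GMM estimators β̂_K = [Σ_i X̃_i'Z_i W_K⁻¹ Σ_i Z_i'X̃_i]⁻¹ Σ_i X̃_i'Z_i W_K⁻¹ Σ_i Z_i'ỹ_i and β̂_F (defined analogously with F-transformed data) are equal. -/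
import Mathlib


open Matrix

/-- Invariance of two-step GMM to transformation: if `F = U K` with `U` the
upper-triangular Cholesky factor of `(K Kᵀ)⁻¹`, and there is an invertible `C` with
`C Z_iᵀ = Z_iᵀ U` for all `i`, then the two-step GMM estimators based on the
`K`-transformed and the `F`-transformed data coincide. -/
theorem twoStep_gmm_invariance
    (N R T p k : ℕ)
    (K : Matrix (Fin R) (Fin T) ℝ) (hpd : (K * Kᵀ).PosDef)
    (U : Matrix (Fin R) (Fin R) ℝ)
    (hUtri : U.BlockTriangular id)
    (hU : Uᵀ * U = (K * Kᵀ)⁻¹)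
    (F : Matrix (Fin R) (Fin T) ℝ) (hF : F = U * K)
    (Z : Fin N → Matrix (Fin R) (Fin k) ℝ)
    (C : Matrix (Fin k) (Fin k) ℝ) (hC : IsUnit C)
    (hCZ : ∀ i, C * (Z i)ᵀ = (Z i)ᵀ * U)
    (X : Fin N → Matrix (Fin T) (Fin p) ℝ)
    (y e : Fin N → Fin T → ℝ)
    (WK WF : Matrix (Fin k) (Fin k) ℝ)
    (hWK : WK = ∑ i, (Z i)ᵀ * vecMulVec (K *ᵥ e i) (K *ᵥ e i) * Z i)
    (hWF : WF = ∑ i, (Z i)ᵀ * vecMulVec (F *ᵥ e i) (F *ᵥ e i) * Z i)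
    (hWKu : IsUnit WK) (hWFu : IsUnit WF)
    (HK HF : Matrix (Fin p) (Fin p) ℝ)
    (hHK : HK = (∑ i, (K * X i)ᵀ * Z i) * WK⁻¹ * (∑ i, (Z i)ᵀ * (K * X i)))
    (hHF : HF = (∑ i, (F * X i)ᵀ * Z i) * WF⁻¹ * (∑ i, (Z i)ᵀ * (F * X i)))
    (hHKu : IsUnit HK) (hHFu : IsUnit HF)
    (βK βF : Fin p → ℝ)
    (hβK : βK = HK⁻¹ *ᵥ (((∑ i, (K * X i)ᵀ * Z i) * WK⁻¹) *ᵥ (∑ i, (Z i)ᵀ *ᵥ (K *ᵥ y i))))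
    (hβF : βF = HF⁻¹ *ᵥ (((∑ i, (F * X i)ᵀ * Z i) * WF⁻¹) *ᵥ (∑ i, (Z i)ᵀ *ᵥ (F *ᵥ y i)))) :
    βF = βK := by
  have hCd : IsUnit C.det := (Matrix.isUnit_iff_isUnit_det C).mp hC
  have hCtd : IsUnit Cᵀ.det := by rwa [Matrix.det_transpose]
  have key : ∀ (M : Matrix (Fin R) (Fin T) ℝ) (v : Fin T → ℝ),
      vecMulVec (M *ᵥ v) (M *ᵥ v) = M * vecMulVec v v * Mᵀ := by
    intro M v
    ext i j
    simp only [vecMulVec_apply, Matrix.mul_apply, Matrix.mulVec,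
      dotProduct, Matrix.transpose_apply, Finset.sum_mul, Finset.mul_sum]
    apply Finset.sum_congr rfl; intro a _
    apply Finset.sum_congr rfl; intro b _
    ring
  have hZF : ∀ i, (Z i)ᵀ * F = C * ((Z i)ᵀ * K) := by
    intro i; rw [hF, ← Matrix.mul_assoc, ← hCZ i, Matrix.mul_assoc]
  have hFZ : ∀ i, Fᵀ * Z i = Kᵀ * Z i * Cᵀ := by
    intro i
    have := congrArg Matrix.transpose (hZF i)
    simpa [Matrix.transpose_mul, Matrix.mul_assoc] using this
  have hW : WF = C * WK * Cᵀ := by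
    rw [hWF, hWK, Matrix.mul_sum, Matrix.sum_mul]
    apply Finset.sum_congr rfl; intro i _
    rw [key, key]
    calc (Z i)ᵀ * (F * vecMulVec (e i) (e i) * Fᵀ) * Z i
        = ((Z i)ᵀ * F) * vecMulVec (e i) (e i) * (Fᵀ * Z i) := by
          simp only [Matrix.mul_assoc]
      _ = (C * ((Z i)ᵀ * K)) * vecMulVec (e i) (e i) * (Kᵀ * Z i * Cᵀ) := by
          rw [hZF, hFZ]
      _ = C * ((Z i)ᵀ * (K * vecMulVec (e i) (e i) * Kᵀ) * Z i) * Cᵀ := by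
          simp only [Matrix.mul_assoc]
  have hWinv : WF⁻¹ = Cᵀ⁻¹ * WK⁻¹ * C⁻¹ := by
    rw [hW, Matrix.mul_inv_rev, Matrix.mul_inv_rev, Matrix.mul_assoc]
  have hA : ∀ i, (F * X i)ᵀ * Z i = ((K * X i)ᵀ * Z i) * Cᵀ := by
    intro i
    rw [Matrix.transpose_mul, Matrix.transpose_mul, Matrix.mul_assoc, hFZ,
      ← Matrix.mul_assoc, ← Matrix.mul_assoc]
  have hB : ∀ i, (Z i)ᵀ * (F * X i) = C * ((Z i)ᵀ * (K * X i)) := by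
    intro i
    calc (Z i)ᵀ * (F * X i) = ((Z i)ᵀ * F) * X i := by rw [Matrix.mul_assoc]
      _ = C * ((Z i)ᵀ * K) * X i := by rw [hZF]
      _ = C * ((Z i)ᵀ * (K * X i)) := by simp only [Matrix.mul_assoc]
  have hAsum : (∑ i, (F * X i)ᵀ * Z i) = (∑ i, (K * X i)ᵀ * Z i) * Cᵀ := by
    rw [Matrix.sum_mul]; exact Finset.sum_congr rfl fun i _ => hA i
  have hBsum : (∑ i, (Z i)ᵀ * (F * X i)) = C * (∑ i, (Z i)ᵀ * (K * X i)) := by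
    rw [Matrix.mul_sum]; exact Finset.sum_congr rfl fun i _ => hB i
  set A := ∑ i, (K * X i)ᵀ * Z i
  set B := ∑ i, (Z i)ᵀ * (K * X i)
  have hCtCt : Cᵀ * Cᵀ⁻¹ = 1 := Matrix.mul_nonsing_inv _ hCtd
  have hCiC : C⁻¹ * C = 1 := Matrix.nonsing_inv_mul _ hCd
  have hmid : (∑ i, (F * X i)ᵀ * Z i) * WF⁻¹ = A * WK⁻¹ * C⁻¹ := by
    rw [hAsum, hWinv]
    calc A * Cᵀ * (Cᵀ⁻¹ * WK⁻¹ * C⁻¹)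
        = A * (Cᵀ * Cᵀ⁻¹) * WK⁻¹ * C⁻¹ := by simp only [Matrix.mul_assoc]
      _ = A * WK⁻¹ * C⁻¹ := by rw [hCtCt, Matrix.mul_one]
  have hH : HF = HK := by
    rw [hHF, hHK, hmid, hBsum]
    calc A * WK⁻¹ * C⁻¹ * (C * B)
        = A * WK⁻¹ * (C⁻¹ * C * B) := by simp only [Matrix.mul_assoc]
      _ = A * WK⁻¹ * B := by rw [hCiC, Matrix.one_mul]
  have h1 : ∀ i, (Z i)ᵀ *ᵥ (F *ᵥ y i) = C *ᵥ ((Z i)ᵀ *ᵥ (K *ᵥ y i)) := by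
    intro i
    simp only [Matrix.mulVec_mulVec]
    rw [hZF i]
  have hvec : (∑ i, (Z i)ᵀ *ᵥ (F *ᵥ y i)) = C *ᵥ (∑ i, (Z i)ᵀ *ᵥ (K *ᵥ y i)) := by
    rw [Finset.sum_congr rfl fun i _ => h1 i]
    simp only [← Matrix.mulVecLin_apply]
    rw [← map_sum]
  rw [hβF, hβK, hH, hmid, hvec]
  simp only [Matrix.mulVec_mulVec, ← Matrix.mul_assoc]
  rw [Matrix.mul_assoc _ C⁻¹ C, hCiC, Matrix.mul_one]
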